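/- Dissipativity of the tamed drift (Lemma 3.9, labeled Le28): Let b : ℝ₊ × ℝ^d → ℝ^d be measurable and suppose for some m ≥ 1, κ₂, κ₃, κ₄ ≥ 0 and κ₅ < 0 that |b(t,x)| ≤ (κ₂(1 + |x|))^m and ⟨x, b(t,x)⟩ ≤ κ₃ + κ₄|x|² + κ₅|x|^{m+1} for all (t,x). Define b_ε(t,x) := ε b(t,x)/(1 + √ε |b(t,x)|^{1−1/m}). Let κ₆ ∈ ℝ satisfy κ₄ + κ₅ < κ₆ if m = 1, and κ₆ < 0 if m > 1. Then there are ε₀ ∈ (0,1) and C₁ > 0 such that for all ε ∈ (0, ε₀) and all (t,x) ∈ [0,∞) × ℝ^d, ε^{−1} [ ⟨x, b_ε(t,x)⟩ + |b_ε(t,x)|² ] ≤ κ₆ |x|² + C₁. -/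

import Mathlib

open scoped ENNReal RealInnerProductSpace

noncomputable section

/-- The tamed drift `b_ε(t,x) := ε b(t,x) / (1 + √ε |b(t,x)|^{1−1/m})`. -/
def tameDrift {d : ℕ} (b : ℝ → EuclideanSpace ℝ (Fin d) → EuclideanSpace ℝ (Fin d))
    (m ε : ℝ) (t : ℝ) (x : EuclideanSpace ℝ (Fin d)) : EuclideanSpace ℝ (Fin d) :=
  (ε / (1 + Real.sqrt ε * ‖b t x‖ ^ (1 - 1 / m))) • b t x


private lemma div_le_div_of_nonpos' {a D D' : ℝ} (ha : a ≤ 0) (hD : 0 < D) (hDD' : D ≤ D') :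
    a / D ≤ a / D' := by
  have hD' : 0 < D' := hD.trans_le hDD'
  rw [div_le_div_iff₀ hD hD']
  nlinarith

set_option maxHeartbeats 1000000 in
private lemma key_ineq (m κ₂ κ₃ κ₄ κ₅ κ₆ : ℝ)
    (hm : 1 ≤ m) (hκ₂ : 0 ≤ κ₂) (hκ₃ : 0 ≤ κ₃) (hκ₄ : 0 ≤ κ₄) (hκ₅ : κ₅ < 0)
    (hκ₆₁ : m = 1 → κ₄ + κ₅ < κ₆) (hκ₆₂ : 1 < m → κ₆ < 0) :
    ∃ ε₀ ∈ Set.Ioo (0:ℝ) 1, ∃ C₁ > 0, ∀ ε ∈ Set.Ioo (0:ℝ) ε₀,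
      ∀ R n I : ℝ, 0 ≤ R → 0 ≤ n → n ≤ (κ₂ * (1 + R)) ^ m →
      I ≤ κ₃ + κ₄ * R ^ 2 + κ₅ * R ^ (m + 1) →
      I / (1 + Real.sqrt ε * n ^ (1 - 1 / m))
        + ε * n ^ 2 / (1 + Real.sqrt ε * n ^ (1 - 1 / m)) ^ 2
        ≤ κ₆ * R ^ 2 + C₁ := by
  rcases eq_or_lt_of_le hm with hm1 | hm1
  · -- m = 1
    have hm1' : m = 1 := hm1.symm
    subst hm1'
    have hδ : 0 < κ₆ - (κ₄ + κ₅) := by linarith [hκ₆₁ rfl]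
    have hden : (0:ℝ) < -κ₅ + 2 * κ₂ ^ 2 + 1 := by nlinarith [sq_nonneg κ₂]
    obtain ⟨s, hspos, hs_mul⟩ : ∃ s : ℝ, 0 < s ∧
        s * (-κ₅ + 2 * κ₂ ^ 2 + 1) = κ₆ - (κ₄ + κ₅) :=
      ⟨_, div_pos hδ hden, div_mul_cancel₀ _ hden.ne'⟩
    refine ⟨min (1/2) (s ^ 2), ⟨by positivity, lt_of_le_of_lt (min_le_left _ _) (by norm_num)⟩,
      κ₃ + 2 * κ₂ ^ 2 + 1, by positivity, ?_⟩
    intro ε hε R n I hR hn hgrow hdiss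
    obtain ⟨hε0, hεlt⟩ := hε
    have hεhalf : ε < 1/2 := hεlt.trans_le (min_le_left _ _)
    have hεs2 : ε < s ^ 2 := hεlt.trans_le (min_le_right _ _)
    have hsqs : Real.sqrt ε ≤ s := by
      calc Real.sqrt ε ≤ Real.sqrt (s ^ 2) := Real.sqrt_le_sqrt hεs2.le
        _ = s := Real.sqrt_sq hspos.le
    have hεsq : ε ≤ Real.sqrt ε := by
      nlinarith [Real.mul_self_sqrt hε0.le, Real.sqrt_nonneg ε]
    rw [show (1:ℝ) - 1 / 1 = 0 by norm_num, Real.rpow_zero, mul_one]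
    rw [show (1:ℝ) + 1 = ((2:ℕ):ℝ) by norm_num, Real.rpow_natCast] at hdiss
    rw [Real.rpow_one] at hgrow
    have hD : (0:ℝ) < 1 + Real.sqrt ε := by positivity
    have h1 : I / (1 + Real.sqrt ε) ≤ (κ₃ + κ₄ * R ^ 2 + κ₅ * R ^ 2) / (1 + Real.sqrt ε) :=
      (div_le_div_iff_of_pos_right hD).mpr hdiss
    have key1 : (κ₃ + κ₄ * R ^ 2 + κ₅ * R ^ 2) / (1 + Real.sqrt ε)
        ≤ κ₃ + κ₄ * R ^ 2 + κ₅ * R ^ 2 + (-κ₅) * Real.sqrt ε * R ^ 2 := by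
      rw [div_le_iff₀ hD]
      nlinarith [Real.sqrt_nonneg ε, sq_nonneg R, mul_nonneg hκ₃ (Real.sqrt_nonneg ε),
        mul_nonneg (mul_nonneg hκ₄ (sq_nonneg R)) (Real.sqrt_nonneg ε),
        mul_nonneg (mul_nonneg (mul_nonneg (neg_nonneg.2 hκ₅.le) (Real.sqrt_nonneg ε))
          (sq_nonneg R)) (Real.sqrt_nonneg ε)]
    have hn2 : n ^ 2 ≤ (κ₂ * (1 + R)) ^ 2 := by nlinarith
    have key2 : ε * n ^ 2 / (1 + Real.sqrt ε) ^ 2 ≤ ε * (κ₂ * (1 + R)) ^ 2 := by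
      have h2 : ε * n ^ 2 / (1 + Real.sqrt ε) ^ 2 ≤ ε * n ^ 2 := by
        apply div_le_self (by positivity)
        nlinarith [Real.sqrt_nonneg ε]
      exact h2.trans (mul_le_mul_of_nonneg_left hn2 hε0.le)
    have hcoef : κ₄ + κ₅ + (-κ₅) * Real.sqrt ε + 2 * κ₂ ^ 2 * ε ≤ κ₆ := by
      nlinarith [mul_nonneg (neg_nonneg.2 hκ₅.le) (sub_nonneg.2 hsqs),
        mul_nonneg (sq_nonneg κ₂) (sub_nonneg.2 (hεsq.trans hsqs))]
    have hfinal : κ₃ + κ₄ * R ^ 2 + κ₅ * R ^ 2 + (-κ₅) * Real.sqrt ε * R ^ 2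
        + ε * (κ₂ * (1 + R)) ^ 2 ≤ κ₆ * R ^ 2 + (κ₃ + 2 * κ₂ ^ 2 + 1) := by
      nlinarith [mul_nonneg (sub_nonneg.2 hcoef) (sq_nonneg R),
        mul_nonneg (mul_nonneg hε0.le (sq_nonneg κ₂)) (sq_nonneg (1 - R)),
        mul_nonneg (sq_nonneg κ₂) (by linarith : (0:ℝ) ≤ 1 - ε)]
    linarith
  · -- 1 < m
    have hκ₆ : κ₆ < 0 := hκ₆₂ hm1
    have hA : 0 < κ₄ - κ₆ := by linarith
    have hmpos : (0:ℝ) < m := by linarith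
    have hm0 : m ≠ 0 := hmpos.ne'
    have hm1ne : m - 1 ≠ 0 := by intro h; apply absurd hm1; simp [show m = 1 by linarith]
    have hq0 : 0 < 1 - 1 / m := by
      have : 1 / m < 1 := by rw [div_lt_one hmpos]; exact hm1
      linarith
    have hinvm : 0 < 1 / m := by positivity
    have h2q : (0:ℝ) ≤ 2 - (1 - 1 / m) := by linarith
    set M : ℝ := (2 * κ₂) ^ (m + 1) with hMdef
    set P : ℝ := (2 * κ₂) ^ (m - 1) with hPdef
    have hM : 0 ≤ M := Real.rpow_nonneg (by linarith) _
    have hP : 0 ≤ P := Real.rpow_nonneg (by linarith) _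
    have hG : 0 ≤ 4 * (κ₄ - κ₆) / (-κ₅) := div_nonneg (by linarith) (by linarith)
    set Ca : ℝ := (κ₄ - κ₆) * (4 * (κ₄ - κ₆) / (-κ₅)) ^ ((2:ℝ) / (m - 1)) with hCadef
    have hCa : 0 ≤ Ca := mul_nonneg hA.le (Real.rpow_nonneg hG _)
    have h2M : (0:ℝ) < 2 * (M + 1) := by linarith
    have h4AP : (0:ℝ) < 4 * (κ₄ - κ₆) * (P + 1) := by nlinarith only [hA, hP]
    obtain ⟨s, hspos, hs1', hs2'⟩ : ∃ s : ℝ, 0 < s ∧ s * (2 * (M + 1)) ≤ -κ₅ ∧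
        s * (4 * (κ₄ - κ₆) * (P + 1)) ≤ -κ₅ := by
      refine ⟨min ((-κ₅) / (2 * (M + 1))) ((-κ₅) / (4 * (κ₄ - κ₆) * (P + 1))),
        lt_min (div_pos (by linarith) h2M) (div_pos (by linarith) h4AP), ?_, ?_⟩
      · rw [← le_div_iff₀ h2M]; exact min_le_left _ _
      · rw [← le_div_iff₀ h4AP]; exact min_le_right _ _
    refine ⟨min (1/2) (s ^ 2), ⟨by positivity, lt_of_le_of_lt (min_le_left _ _) (by norm_num)⟩,
      κ₃ + κ₄ + M + (-κ₆) + Ca + 1, by linarith, ?_⟩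
    intro ε hε R n I hR hn hgrow hdiss
    obtain ⟨hε0, hεlt⟩ := hε
    have hεhalf : ε < 1/2 := hεlt.trans_le (min_le_left _ _)
    have hεs2 : ε < s ^ 2 := hεlt.trans_le (min_le_right _ _)
    have hsqnn : 0 ≤ Real.sqrt ε := Real.sqrt_nonneg ε
    have hsqs : Real.sqrt ε ≤ s := by
      calc Real.sqrt ε ≤ Real.sqrt (s ^ 2) := Real.sqrt_le_sqrt hεs2.le
        _ = s := Real.sqrt_sq hspos.le
    have hsq1 : Real.sqrt ε ≤ 1 := by
      calc Real.sqrt ε ≤ Real.sqrt 1 := Real.sqrt_le_sqrt (by linarith)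
        _ = 1 := Real.sqrt_one
    set K : ℝ := κ₂ * (1 + R) with hKdef
    have hK : 0 ≤ K := mul_nonneg hκ₂ (by linarith)
    set D : ℝ := 1 + Real.sqrt ε * n ^ (1 - 1 / m) with hDdef
    have hD1 : (1:ℝ) ≤ D := le_add_of_nonneg_right (mul_nonneg hsqnn (Real.rpow_nonneg hn _))
    have hD : 0 < D := lt_of_lt_of_le one_pos hD1
    have hRP : 0 ≤ R ^ (m + 1) := Real.rpow_nonneg hR _
    have hRm1 : 0 ≤ R ^ (m - 1) := Real.rpow_nonneg hR _
    -- Step A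
    have hIS : I / D ≤ κ₃ + κ₄ * R ^ 2 + κ₅ * R ^ (m + 1) / D := by
      have a1 : I / D ≤ (κ₃ + κ₄ * R ^ 2 + κ₅ * R ^ (m + 1)) / D :=
        (div_le_div_iff_of_pos_right hD).mpr hdiss
      have a2 : (κ₃ + κ₄ * R ^ 2 + κ₅ * R ^ (m + 1)) / D
          = κ₃ / D + κ₄ * R ^ 2 / D + κ₅ * R ^ (m + 1) / D := by ring
      have a3 : κ₃ / D ≤ κ₃ := div_le_self hκ₃ hD1
      have a4 : κ₄ * R ^ 2 / D ≤ κ₄ * R ^ 2 := div_le_self (by positivity) hD1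
      linarith [a2 ▸ a1]
    -- Step B
    have hsec : ε * n ^ 2 / D ^ 2 ≤ Real.sqrt ε * n ^ ((2:ℝ) - (1 - 1 / m)) / D := by
      rcases eq_or_lt_of_le hn with h0 | hnpos
      · rw [hDdef, ← h0]
        rw [Real.zero_rpow hq0.ne', Real.zero_rpow (show (2:ℝ) - (1 - 1 / m) ≠ 0 from
          (by linarith : (0:ℝ) < 2 - (1 - 1 / m)).ne')]
        norm_num
      · have hD2 : (0:ℝ) < D ^ 2 := by positivity
        rw [div_le_div_iff₀ hD2 hD]
        have e1 : Real.sqrt ε * Real.sqrt ε = ε := Real.mul_self_sqrt hε0.le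
        have e2 : n ^ (1 - 1 / m) * n ^ ((2:ℝ) - (1 - 1 / m)) = n ^ (2:ℝ) := by
          rw [← Real.rpow_add hnpos]; norm_num
        have e3 : n ^ (2:ℝ) = n ^ 2 := by
          rw [show (2:ℝ) = ((2:ℕ):ℝ) by norm_num, Real.rpow_natCast]
        have hsplit : ε * n ^ 2 = (Real.sqrt ε * n ^ (1 - 1 / m))
            * (Real.sqrt ε * n ^ ((2:ℝ) - (1 - 1 / m))) := by
          rw [← e3, ← e2]
          linear_combination (-(n ^ (1 - 1 / m) * n ^ ((2:ℝ) - (1 - 1 / m)))) * e1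
        have h5 : Real.sqrt ε * n ^ (1 - 1 / m) ≤ D := by rw [hDdef]; linarith
        have h6 : 0 ≤ Real.sqrt ε * n ^ ((2:ℝ) - (1 - 1 / m)) :=
          mul_nonneg hsqnn (Real.rpow_nonneg hn _)
        have h7 : ε * n ^ 2 * D = Real.sqrt ε * n ^ (1 - 1 / m)
            * (Real.sqrt ε * n ^ ((2:ℝ) - (1 - 1 / m))) * D := by rw [hsplit]
        nlinarith only [h7, mul_nonneg (mul_nonneg (sub_nonneg.2 h5) h6) hD.le]
    -- Step C
    have hnK : n ^ ((2:ℝ) - (1 - 1 / m)) ≤ K ^ (m + 1) := by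
      have c1 : n ^ ((2:ℝ) - (1 - 1 / m)) ≤ (K ^ m) ^ ((2:ℝ) - (1 - 1 / m)) :=
        Real.rpow_le_rpow hn hgrow h2q
      have c2 : (K ^ m) ^ ((2:ℝ) - (1 - 1 / m)) = K ^ (m + 1) := by
        rw [← Real.rpow_mul hK]; congr 1; field_simp; try ring
      linarith [c2 ▸ c1]
    have hsecK : Real.sqrt ε * n ^ ((2:ℝ) - (1 - 1 / m)) / D
        ≤ Real.sqrt ε * K ^ (m + 1) / D :=
      (div_le_div_iff_of_pos_right hD).mpr (mul_le_mul_of_nonneg_left hnK hsqnn)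
    have hT : I / D + ε * n ^ 2 / D ^ 2
        ≤ κ₃ + κ₄ * R ^ 2 + (κ₅ * R ^ (m + 1) / D + Real.sqrt ε * K ^ (m + 1) / D) := by
      linarith
    have g1 : κ₅ * R ^ (m + 1) ≤ 0 := by nlinarith only [hκ₅, hRP]
    rcases le_total R 1 with hR1 | hR1
    · -- R ≤ 1
      have t1 : κ₅ * R ^ (m + 1) / D ≤ 0 := div_nonpos_of_nonpos_of_nonneg g1 hD.le
      have b2 : K ≤ 2 * κ₂ := by rw [hKdef]; nlinarith only [hκ₂, hR1]
      have b3 : K ^ (m + 1) ≤ M := Real.rpow_le_rpow hK b2 (by linarith)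
      have t2 : Real.sqrt ε * K ^ (m + 1) / D ≤ M := by
        have b1 : Real.sqrt ε * K ^ (m + 1) / D ≤ Real.sqrt ε * K ^ (m + 1) :=
          div_le_self (mul_nonneg hsqnn (Real.rpow_nonneg hK _)) hD1
        nlinarith only [b1, b3, hsq1, hsqnn, Real.rpow_nonneg hK (m + 1), hM]
      have hR2 : R ^ 2 ≤ 1 := by nlinarith only [hR, hR1]
      have t3 : κ₆ ≤ κ₆ * R ^ 2 := by nlinarith only [hκ₆.le, hR2]
      have t4 : κ₄ * R ^ 2 ≤ κ₄ := by nlinarith only [hκ₄, hR2]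
      linarith
    · -- 1 ≤ R
      have hRpos : 0 < R := lt_of_lt_of_le one_pos hR1
      have hK2 : K ≤ 2 * κ₂ * R := by rw [hKdef]; nlinarith only [hκ₂, hR1]
      have hKm1 : K ^ (m + 1) ≤ M * R ^ (m + 1) := by
        calc K ^ (m + 1) ≤ (2 * κ₂ * R) ^ (m + 1) := Real.rpow_le_rpow hK hK2 (by linarith)
          _ = M * R ^ (m + 1) := Real.mul_rpow (by linarith) hR
      have hsM : Real.sqrt ε * M ≤ -κ₅ / 2 := by
        nlinarith only [mul_le_mul_of_nonneg_right hsqs hM, hs1', hspos.le, hM]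
      have hnum : κ₅ * R ^ (m + 1) + Real.sqrt ε * K ^ (m + 1) ≤ κ₅ / 2 * R ^ (m + 1) := by
        nlinarith only [mul_le_mul_of_nonneg_left hKm1 hsqnn,
          mul_le_mul_of_nonneg_right hsM hRP]
      have hnumD : κ₅ * R ^ (m + 1) / D + Real.sqrt ε * K ^ (m + 1) / D
          ≤ κ₅ / 2 * R ^ (m + 1) / D := by
        rw [← add_div]; exact (div_le_div_iff_of_pos_right hD).mpr hnum
      have g1' : κ₅ / 2 * R ^ (m + 1) ≤ 0 := by nlinarith only [hκ₅, hRP]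
      have hEbound : n ^ (1 - 1 / m) ≤ P * R ^ (m - 1) := by
        have d1 : n ^ (1 - 1 / m) ≤ (K ^ m) ^ (1 - 1 / m) :=
          Real.rpow_le_rpow hn hgrow hq0.le
        have d2 : (K ^ m) ^ (1 - 1 / m) = K ^ (m - 1) := by
          rw [← Real.rpow_mul hK]; congr 1; field_simp; try ring
        have d3 : K ^ (m - 1) ≤ (2 * κ₂ * R) ^ (m - 1) :=
          Real.rpow_le_rpow hK hK2 (by linarith)
        have d4 : (2 * κ₂ * R) ^ (m - 1) = P * R ^ (m - 1) := Real.mul_rpow (by linarith) hR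
        linarith [d2 ▸ d1, d4 ▸ d3]
      have hDle : D ≤ 1 + Real.sqrt ε * (P * R ^ (m - 1)) := by
        rw [hDdef]
        have := mul_le_mul_of_nonneg_left hEbound hsqnn
        linarith
      have hsplitR : R ^ (m + 1) = R ^ 2 * R ^ (m - 1) := by
        rw [← Real.rpow_natCast R 2, ← Real.rpow_add hRpos]
        congr 1; push_cast; ring
      rcases le_or_gt (Real.sqrt ε * (P * R ^ (m - 1))) 1 with hb | hb
      · -- small: D ≤ 2
        have hD2' : D ≤ 2 := by linarith
        have g2 : κ₅ / 2 * R ^ (m + 1) / D ≤ κ₅ / 2 * R ^ (m + 1) / 2 :=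
          div_le_div_of_nonpos' g1' hD hD2'
        rcases le_or_gt (4 * (κ₄ - κ₆) / (-κ₅)) (R ^ (m - 1)) with hg | hg
        · have hGmul : 4 * (κ₄ - κ₆) / (-κ₅) * (-κ₅) = 4 * (κ₄ - κ₆) :=
            div_mul_cancel₀ _ (by linarith : (-κ₅) ≠ 0)
          have e3 : κ₅ / 4 * R ^ (m - 1) ≤ -(κ₄ - κ₆) := by
            nlinarith only [mul_le_mul_of_nonneg_left hg (by linarith : (0:ℝ) ≤ -κ₅ / 4),
              hGmul]
          have e2 : (κ₄ - κ₆) * R ^ 2 + κ₅ / 4 * (R ^ 2 * R ^ (m - 1)) ≤ 0 := by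
            nlinarith only [mul_le_mul_of_nonneg_left e3 (sq_nonneg R)]
          have e1 : κ₅ / 2 * R ^ (m + 1) / 2 = κ₅ / 4 * (R ^ 2 * R ^ (m - 1)) := by
            rw [hsplitR]; ring
          linarith [e1 ▸ g2]
        · have r1 : R ≤ (4 * (κ₄ - κ₆) / (-κ₅)) ^ ((1:ℝ) / (m - 1)) := by
            have hexp : (0:ℝ) ≤ 1 / (m - 1) := div_nonneg zero_le_one (by linarith)
            have q1 : (R ^ (m - 1)) ^ ((1:ℝ) / (m - 1))
                ≤ (4 * (κ₄ - κ₆) / (-κ₅)) ^ ((1:ℝ) / (m - 1)) :=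
              Real.rpow_le_rpow hRm1 hg.le hexp
            have q2 : (R ^ (m - 1)) ^ ((1:ℝ) / (m - 1)) = R := by
              rw [← Real.rpow_mul hR, show (m - 1) * ((1:ℝ) / (m - 1)) = 1 by field_simp,
                Real.rpow_one]
            rw [q2] at q1; exact q1
          have r2 : R ^ 2 ≤ ((4 * (κ₄ - κ₆) / (-κ₅)) ^ ((1:ℝ) / (m - 1))) ^ 2 := by
            nlinarith only [hR, r1]
          have r3 : ((4 * (κ₄ - κ₆) / (-κ₅)) ^ ((1:ℝ) / (m - 1))) ^ 2
              = (4 * (κ₄ - κ₆) / (-κ₅)) ^ ((2:ℝ) / (m - 1)) := by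
            rw [← Real.rpow_natCast _ 2, ← Real.rpow_mul hG]
            congr 1; push_cast; ring
          have r4 : (κ₄ - κ₆) * R ^ 2 ≤ Ca := by
            rw [hCadef, ← r3]
            exact mul_le_mul_of_nonneg_left r2 hA.le
          have g3 : κ₅ / 2 * R ^ (m + 1) / 2 ≤ 0 :=
            div_nonpos_of_nonpos_of_nonneg g1' (by norm_num)
          linarith
      · -- large: D ≤ 2 √ε P R^(m-1)
        have hD2' : D ≤ 2 * (Real.sqrt ε * (P * R ^ (m - 1))) := by linarith
        have hpos2 : 0 < 2 * (Real.sqrt ε * (P * R ^ (m - 1))) := by linarith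
        have g2 : κ₅ / 2 * R ^ (m + 1) / D
            ≤ κ₅ / 2 * R ^ (m + 1) / (2 * (Real.sqrt ε * (P * R ^ (m - 1)))) :=
          div_le_div_of_nonpos' g1' hD hD2'
        have h15 : 4 * (κ₄ - κ₆) * (Real.sqrt ε * P) ≤ -κ₅ := by
          nlinarith only [mul_le_mul_of_nonneg_left (mul_le_mul_of_nonneg_right hsqs hP)
            (by linarith : (0:ℝ) ≤ 4 * (κ₄ - κ₆)), mul_nonneg hA.le hspos.le, hs2']
        have g3 : κ₅ / 2 * R ^ (m + 1) / (2 * (Real.sqrt ε * (P * R ^ (m - 1))))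
            ≤ -(κ₄ - κ₆) * R ^ 2 := by
          rw [div_le_iff₀ hpos2, hsplitR]
          nlinarith only [mul_nonneg (mul_nonneg (sq_nonneg R) hRm1)
            (by linarith : (0:ℝ) ≤ -κ₅ / 2 - 2 * (κ₄ - κ₆) * (Real.sqrt ε * P))]
        linarith

/-- **Lemma 3.9 (Le28): dissipativity of the tamed drift.** If
`|b(t,x)| ≤ (κ₂(1+|x|))^m` and `⟨x, b(t,x)⟩ ≤ κ₃ + κ₄|x|² + κ₅|x|^{m+1}` with `κ₅ < 0`,
and `κ₆` satisfies `κ₄ + κ₅ < κ₆` if `m = 1` and `κ₆ < 0` if `m > 1`, then there are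
`ε₀ ∈ (0,1)` and `C₁ > 0` such that for all `ε ∈ (0,ε₀)` and `(t,x) ∈ [0,∞) × ℝ^d`,
`ε⁻¹ (⟨x, b_ε(t,x)⟩ + |b_ε(t,x)|²) ≤ κ₆ |x|² + C₁`. -/
theorem tamed_drift_dissipativity
    {d : ℕ} (b : ℝ → EuclideanSpace ℝ (Fin d) → EuclideanSpace ℝ (Fin d))
    (m κ₂ κ₃ κ₄ κ₅ κ₆ : ℝ)
    (hm : 1 ≤ m) (hκ₂ : 0 ≤ κ₂) (hκ₃ : 0 ≤ κ₃) (hκ₄ : 0 ≤ κ₄) (hκ₅ : κ₅ < 0)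
    (hb_growth : ∀ t x, 0 ≤ t → ‖b t x‖ ≤ (κ₂ * (1 + ‖x‖)) ^ m)
    (hb_diss : ∀ t x, 0 ≤ t → ⟪x, b t x⟫ ≤ κ₃ + κ₄ * ‖x‖ ^ 2 + κ₅ * ‖x‖ ^ (m + 1))
    (hκ₆₁ : m = 1 → κ₄ + κ₅ < κ₆) (hκ₆₂ : 1 < m → κ₆ < 0) :
    ∃ ε₀ ∈ Set.Ioo (0:ℝ) 1, ∃ C₁ > 0, ∀ ε ∈ Set.Ioo (0:ℝ) ε₀, ∀ t x, 0 ≤ t →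
      ε⁻¹ * (⟪x, tameDrift b m ε t x⟫ + ‖tameDrift b m ε t x‖ ^ 2)
        ≤ κ₆ * ‖x‖ ^ 2 + C₁ := by
  obtain ⟨ε₀, hε₀, C₁, hC₁, hkey⟩ := key_ineq m κ₂ κ₃ κ₄ κ₅ κ₆ hm hκ₂ hκ₃ hκ₄ hκ₅ hκ₆₁ hκ₆₂
  refine ⟨ε₀, hε₀, C₁, hC₁, ?_⟩
  intro ε hε t x ht
  have hεpos : 0 < ε := hε.1
  set B := b t x with hB
  set n : ℝ := ‖B‖ with hn
  set D : ℝ := 1 + Real.sqrt ε * n ^ (1 - 1 / m) with hDdef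
  have hD1 : (1:ℝ) ≤ D := le_add_of_nonneg_right
    (mul_nonneg (Real.sqrt_nonneg _) (Real.rpow_nonneg (norm_nonneg _) _))
  have hD : 0 < D := lt_of_lt_of_le one_pos hD1
  have htame : tameDrift b m ε t x = (ε / D) • B := rfl
  have hεD : 0 ≤ ε / D := div_nonneg hεpos.le hD.le
  rw [htame, real_inner_smul_right, norm_smul, Real.norm_eq_abs, abs_of_nonneg hεD]
  have key := hkey ε hε ‖x‖ n ⟪x, B⟫ (norm_nonneg x) (norm_nonneg B)
    (hb_growth t x ht) (hb_diss t x ht)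
  have heq : ε⁻¹ * (ε / D * ⟪x, B⟫ + (ε / D * n) ^ 2)
      = ⟪x, B⟫ / D + ε * n ^ 2 / D ^ 2 := by
    field_simp
  rw [heq]
  exact key
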